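/- Let g : [a,b] → ℝ be C^{1,1}, i.e. differentiable with g' Lipschitz of constant M. Then the convex envelope conv_{[a,b]} g is C^{1,1} on [a,b] and the Lipschitz constant of its derivative is at most M. -/

import Mathlib

open Set

/-- The convex envelope of `g` on the interval `[a,b]`: the pointwise supremum of all
convex functions on `[a,b]` lying below `g` on `[a,b]`. -/
noncomputable def convEnv (a b : ℝ) (g : ℝ → ℝ) : ℝ → ℝ :=
  fun u => sSup {y : ℝ | ∃ h : ℝ → ℝ, ConvexOn ℝ (Set.Icc a b) h ∧
    (∀ x ∈ Set.Icc a b, h x ≤ g x) ∧ y = h u}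

namespace Stmt3Aux

open Filter Topology

/-- The candidate set. -/
def cset (a b : ℝ) (g : ℝ → ℝ) (u : ℝ) : Set ℝ :=
  {y : ℝ | ∃ h : ℝ → ℝ, ConvexOn ℝ (Set.Icc a b) h ∧
    (∀ x ∈ Set.Icc a b, h x ≤ g x) ∧ y = h u}

lemma convEnv_eq (a b : ℝ) (g : ℝ → ℝ) (u : ℝ) :
    convEnv a b g u = sSup (cset a b g u) := rfl

lemma lineConvexOn {s : Set ℝ} (hs : Convex ℝ s) (c d : ℝ) :
    ConvexOn ℝ s (fun z => c + d * z) := by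
  refine ⟨hs, fun x _ y _ p q hp hq hpq => le_of_eq ?_⟩
  simp only [smul_eq_mul]
  linear_combination (-(c : ℝ)) * hpq

variable {a b : ℝ} {g : ℝ → ℝ}

lemma cset_bddAbove {u : ℝ} (hu : u ∈ Icc a b) : BddAbove (cset a b g u) := by
  refine ⟨g u, ?_⟩
  rintro y ⟨h, _, hle, rfl⟩
  exact hle u hu

lemma cset_nonempty (hab : a ≤ b) (gc : ContinuousOn g (Icc a b)) (u : ℝ) :
    (cset a b g u).Nonempty := by
  refine ⟨sInf (g '' Icc a b), fun _ => sInf (g '' Icc a b), convexOn_const _ (convex_Icc a b),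
    fun x hx => ?_, rfl⟩
  exact csInf_le ((isCompact_Icc.image_of_continuousOn gc).bddBelow) ⟨x, hx, rfl⟩

lemma le_convEnv {h : ℝ → ℝ} (hh : ConvexOn ℝ (Icc a b) h)
    (hhg : ∀ x ∈ Icc a b, h x ≤ g x) {u : ℝ} (hu : u ∈ Icc a b) :
    h u ≤ convEnv a b g u :=
  le_csSup (cset_bddAbove hu) ⟨h, hh, hhg, rfl⟩

lemma convEnv_le (hab : a ≤ b) (gc : ContinuousOn g (Icc a b)) {u : ℝ} (hu : u ∈ Icc a b) :
    convEnv a b g u ≤ g u := by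
  refine csSup_le (cset_nonempty hab gc u) ?_
  rintro y ⟨h, _, hle, rfl⟩
  exact hle u hu

lemma convEnv_convexOn (hab : a ≤ b) (gc : ContinuousOn g (Icc a b)) :
    ConvexOn ℝ (Icc a b) (convEnv a b g) := by
  refine ⟨convex_Icc a b, fun x hx y hy p q hp hq hpq => ?_⟩
  have hmem : p • x + q • y ∈ Icc a b := (convex_Icc a b) hx hy hp hq hpq
  refine csSup_le (cset_nonempty hab gc _) ?_
  rintro t ⟨h, hc, hle, rfl⟩
  calc h (p • x + q • y) ≤ p • h x + q • h y := hc.2 hx hy hp hq hpq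
    _ ≤ p • convEnv a b g x + q • convEnv a b g y := by
        simp only [smul_eq_mul]
        gcongr
        · exact le_convEnv hc hle hx
        · exact le_convEnv hc hle hy

/-- All hypotheses bundled. `f` is an abstract function with the properties of the
convex envelope. -/
structure Env (a b : ℝ) (g g' f : ℝ → ℝ) (M : NNReal) (L : ℝ) : Prop where
  hab : a < b
  conv : ConvexOn ℝ (Icc a b) f
  fg : ∀ z ∈ Icc a b, f z ≤ g z
  max : ∀ h : ℝ → ℝ, ConvexOn ℝ (Icc a b) h → (∀ z ∈ Icc a b, h z ≤ g z) →
    ∀ z ∈ Icc a b, h z ≤ f z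
  fa : f a = g a
  fb : f b = g b
  gc : ContinuousOn g (Icc a b)
  hg : ∀ x ∈ Icc a b, HasDerivWithinAt g (g' x) (Icc a b) x
  hM : LipschitzOnWith M g' (Icc a b)
  hL : ∀ z ∈ Icc a b, ∀ w ∈ Icc a b, |g z - g w| ≤ L * |z - w|

/-- The candidate derivative: sup of slopes from the left (inf of slopes from the right at `a`). -/
noncomputable def msl (a b : ℝ) (f : ℝ → ℝ) (x : ℝ) : ℝ :=
  if x = a then sInf (slope f x '' Ioc x b) else sSup (slope f x '' Ico a x)

variable {g' f : ℝ → ℝ} {M : NNReal} {L : ℝ}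

lemma Env.minor_a (H : Env a b g g' f M L) {z : ℝ} (hz : z ∈ Icc a b) :
    g a - L * (z - a) ≤ f z := by
  have hline : ∀ w ∈ Icc a b, (g a + L * a) + (-L) * w ≤ g w := by
    intro w hw
    have := H.hL a (left_mem_Icc.2 H.hab.le) w hw
    rw [abs_sub_comm, abs_of_nonpos (by linarith [hw.1] : a - w ≤ 0)] at this
    have h2 := abs_le.1 this
    linarith [h2.1]
  have := H.max _ (lineConvexOn (convex_Icc a b) (g a + L * a) (-L)) hline z hz
  linarith

lemma Env.minor_b (H : Env a b g g' f M L) {z : ℝ} (hz : z ∈ Icc a b) :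
    g b - L * (b - z) ≤ f z := by
  have hline : ∀ w ∈ Icc a b, (g b - L * b) + L * w ≤ g w := by
    intro w hw
    have := H.hL b (right_mem_Icc.2 H.hab.le) w hw
    rw [abs_of_nonneg (by linarith [hw.2] : (0:ℝ) ≤ b - w)] at this
    have h2 := abs_le.1 this
    linarith [h2.1]
  have := H.max _ (lineConvexOn (convex_Icc a b) (g b - L * b) L) hline z hz
  linarith

lemma Env.bddBelow_right (H : Env a b g g' f M L) :
    BddBelow (slope f a '' Ioc a b) := by
  refine ⟨-L, ?_⟩
  rintro _ ⟨z, hz, rfl⟩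
  have hz' : z ∈ Icc a b := ⟨hz.1.le, hz.2⟩
  have h1 : g a - L * (z - a) ≤ f z := H.minor_a hz'
  rw [slope_def_field]
  rw [le_div_iff₀ (by linarith [hz.1] : (0:ℝ) < z - a)]
  have := H.fa
  linarith

lemma Env.bddAbove_left (H : Env a b g g' f M L) {x : ℝ} (hax : a < x) (hxb : x ≤ b) :
    BddAbove (slope f x '' Ico a x) := by
  rcases lt_or_eq_of_le hxb with hlt | heq
  · refine ⟨slope f x b, ?_⟩
    rintro _ ⟨z, hz, rfl⟩
    have h := H.conv.slope_mono_adjacent ⟨hz.1, (hz.2.trans hlt).le⟩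
      (right_mem_Icc.2 H.hab.le) hz.2 hlt
    rw [slope_comm, slope_def_field, slope_def_field]
    exact h
  · subst heq
    refine ⟨L, ?_⟩
    rintro _ ⟨z, hz, rfl⟩
    have hz' : z ∈ Icc a x := ⟨hz.1, hz.2.le⟩
    have h1 : g x - L * (x - z) ≤ f z := H.minor_b hz'
    rw [slope_comm, slope_def_field]
    rw [div_le_iff₀ (by linarith [hz.2] : (0:ℝ) < x - z)]
    have := H.fb
    linarith

/-- Inequality (1): the line through `(x, f x)` with slope `msl x` lies below `f` on `[a,b]`. -/
lemma Env.line_le (H : Env a b g g' f M L) {x z : ℝ} (hx : x ∈ Icc a b) (hz : z ∈ Icc a b) :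
    f x + msl a b f x * (z - x) ≤ f z := by
  rcases eq_or_ne x a with rfl | hxa
  · rw [msl, if_pos rfl]
    rcases eq_or_lt_of_le hz.1 with rfl | haz
    · simp
    · have hmem : slope f x z ∈ slope f x '' Ioc x b := ⟨z, ⟨haz, hz.2⟩, rfl⟩
      have h1 : sInf (slope f x '' Ioc x b) ≤ slope f x z := csInf_le H.bddBelow_right hmem
      rw [slope_def_field, le_div_iff₀ (by linarith : (0:ℝ) < z - x)] at h1
      linarith
  · have hax : a < x := lt_of_le_of_ne hx.1 (Ne.symm hxa)
    rw [msl, if_neg hxa]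
    rcases lt_trichotomy z x with hzx | rfl | hxz
    · have hmem : slope f x z ∈ slope f x '' Ico a x := ⟨z, ⟨hz.1, hzx⟩, rfl⟩
      have h1 : slope f x z ≤ sSup (slope f x '' Ico a x) :=
        le_csSup (H.bddAbove_left hax hx.2) hmem
      rw [slope_def_field] at h1
      rw [div_le_iff_of_neg (by linarith : z - x < 0)] at h1
      linarith
    · simp
    · have h1 : sSup (slope f x '' Ico a x) ≤ slope f x z := by
        refine csSup_le ⟨slope f x a, ⟨a, ⟨le_refl a, hax⟩, rfl⟩⟩ ?_
        rintro _ ⟨w, hw, rfl⟩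
        have h := H.conv.slope_mono_adjacent ⟨hw.1, hw.2.le.trans hx.2⟩ hz hw.2 hxz
        rw [slope_def_field, slope_def_field]
        calc (f w - f x) / (w - x) = (f x - f w) / (x - w) := by
              rw [div_eq_div_iff (by linarith [hw.2]) (by linarith [hw.2])]; ring
          _ ≤ (f z - f x) / (z - x) := h
      rw [slope_def_field, le_div_iff₀ (by linarith : (0:ℝ) < z - x)] at h1
      linarith


/-- Derivative facts for the auxiliary Taylor computations. -/
lemma Env.hasDerivAt_interior (H : Env a b g g' f M L) {z : ℝ} (hz : z ∈ Ioo a b) :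
    HasDerivAt g (g' z) z :=
  (H.hg z ⟨hz.1.le, hz.2.le⟩).hasDerivAt (Icc_mem_nhds hz.1 hz.2)

lemma Env.lip (H : Env a b g g' f M L) {z w : ℝ} (hz : z ∈ Icc a b) (hw : w ∈ Icc a b) :
    |g' z - g' w| ≤ (M : ℝ) * |z - w| := by
  have := H.hM.dist_le_mul z hz w hw
  rwa [Real.dist_eq, Real.dist_eq] at this

/-- Taylor upper bound: `g y ≤ g x + g' x (y-x) + M/2 (y-x)²`. -/
lemma Env.taylor_le (H : Env a b g g' f M L) {x y : ℝ} (hx : x ∈ Icc a b) (hy : y ∈ Icc a b) :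
    g y ≤ g x + g' x * (y - x) + (M : ℝ) / 2 * (y - x) ^ 2 := by
  set ψ : ℝ → ℝ := fun z => g x + g' x * (z - x) + (M : ℝ) / 2 * (z - x) ^ 2 - g z with hψ
  have hpoly : ∀ z : ℝ, HasDerivAt (fun w : ℝ => g x + g' x * (w - x) + (M : ℝ) / 2 * (w - x) ^ 2)
      (g' x + (M : ℝ) * (z - x)) z := by
    intro z
    have h1 : HasDerivAt (fun w : ℝ => w - x) 1 z := (hasDerivAt_id z).sub_const x
    have h2 : HasDerivAt (fun w : ℝ => g' x * (w - x)) (g' x * 1) z := h1.const_mul _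
    have h3 := h1.pow 2
    have h4 := h3.const_mul ((M : ℝ) / 2)
    have := (h2.const_add (g x)).add h4
    convert this using 1
    · rfl
    · rfl
    · rfl
    norm_num
    ring
  have hderiv : ∀ z ∈ Ioo a b, HasDerivAt ψ (g' x + (M : ℝ) * (z - x) - g' z) z := by
    intro z hz
    exact (hpoly z).sub (H.hasDerivAt_interior hz)
  rcases le_total x y with hxy | hyx
  · have hcont : ContinuousOn ψ (Icc x y) := by
      apply ContinuousOn.sub
      · fun_prop
      · exact H.gc.mono (Icc_subset_Icc hx.1 hy.2)
    have hsub : Ioo x y ⊆ Ioo a b := Ioo_subset_Ioo hx.1 hy.2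
    have hmono : MonotoneOn ψ (Icc x y) := by
      apply monotoneOn_of_deriv_nonneg (convex_Icc x y) hcont
      · intro z hz
        rw [interior_Icc] at hz
        exact (hderiv z (hsub hz)).differentiableAt.differentiableWithinAt
      · intro z hz
        rw [interior_Icc] at hz
        rw [(hderiv z (hsub hz)).deriv]
        have hzm : z ∈ Icc a b := ⟨hx.1.trans hz.1.le, hz.2.le.trans hy.2⟩
        have := abs_le.1 (H.lip hzm hx)
        rw [abs_of_nonneg (by linarith [hz.1] : (0:ℝ) ≤ z - x)] at this
        linarith [this.1]
    have := hmono (left_mem_Icc.2 hxy) (right_mem_Icc.2 hxy) hxy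
    simp only [hψ] at this
    nlinarith [this]
  · have hcont : ContinuousOn ψ (Icc y x) := by
      apply ContinuousOn.sub
      · fun_prop
      · exact H.gc.mono (Icc_subset_Icc hy.1 hx.2)
    have hsub : Ioo y x ⊆ Ioo a b := Ioo_subset_Ioo hy.1 hx.2
    have hmono : AntitoneOn ψ (Icc y x) := by
      apply antitoneOn_of_deriv_nonpos (convex_Icc y x) hcont
      · intro z hz
        rw [interior_Icc] at hz
        exact (hderiv z (hsub hz)).differentiableAt.differentiableWithinAt
      · intro z hz
        rw [interior_Icc] at hz
        rw [(hderiv z (hsub hz)).deriv]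
        have hzm : z ∈ Icc a b := ⟨hy.1.trans hz.1.le, hz.2.le.trans hx.2⟩
        have := abs_le.1 (H.lip hx hzm)
        rw [abs_of_nonneg (by linarith [hz.2] : (0:ℝ) ≤ x - z)] at this
        linarith [this.1]
    have := hmono (left_mem_Icc.2 hyx) (right_mem_Icc.2 hyx) hyx
    simp only [hψ] at this
    nlinarith [this]

/-- Taylor lower bound: `g y ≥ g x + g' x (y-x) - M/2 (y-x)²`. -/
lemma Env.taylor_ge (H : Env a b g g' f M L) {x y : ℝ} (hx : x ∈ Icc a b) (hy : y ∈ Icc a b) :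
    g x + g' x * (y - x) - (M : ℝ) / 2 * (y - x) ^ 2 ≤ g y := by
  set ψ : ℝ → ℝ := fun z => g z - (g x + g' x * (z - x) - (M : ℝ) / 2 * (z - x) ^ 2) with hψ
  have hpoly : ∀ z : ℝ, HasDerivAt (fun w : ℝ => g x + g' x * (w - x) - (M : ℝ) / 2 * (w - x) ^ 2)
      (g' x - (M : ℝ) * (z - x)) z := by
    intro z
    have h1 : HasDerivAt (fun w : ℝ => w - x) 1 z := (hasDerivAt_id z).sub_const x
    have h2 : HasDerivAt (fun w : ℝ => g' x * (w - x)) (g' x * 1) z := h1.const_mul _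
    have h3 := h1.pow 2
    have h4 := h3.const_mul ((M : ℝ) / 2)
    have := (h2.const_add (g x)).sub h4
    convert this using 1
    · rfl
    · rfl
    · rfl
    norm_num
    ring
  have hderiv : ∀ z ∈ Ioo a b, HasDerivAt ψ (g' z - (g' x - (M : ℝ) * (z - x))) z := by
    intro z hz
    exact (H.hasDerivAt_interior hz).sub (hpoly z)
  rcases le_total x y with hxy | hyx
  · have hcont : ContinuousOn ψ (Icc x y) := by
      apply ContinuousOn.sub
      · exact H.gc.mono (Icc_subset_Icc hx.1 hy.2)
      · fun_prop
    have hsub : Ioo x y ⊆ Ioo a b := Ioo_subset_Ioo hx.1 hy.2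
    have hmono : MonotoneOn ψ (Icc x y) := by
      apply monotoneOn_of_deriv_nonneg (convex_Icc x y) hcont
      · intro z hz
        rw [interior_Icc] at hz
        exact (hderiv z (hsub hz)).differentiableAt.differentiableWithinAt
      · intro z hz
        rw [interior_Icc] at hz
        rw [(hderiv z (hsub hz)).deriv]
        have hzm : z ∈ Icc a b := ⟨hx.1.trans hz.1.le, hz.2.le.trans hy.2⟩
        have := abs_le.1 (H.lip hzm hx)
        rw [abs_of_nonneg (by linarith [hz.1] : (0:ℝ) ≤ z - x)] at this
        linarith [this.1]
    have := hmono (left_mem_Icc.2 hxy) (right_mem_Icc.2 hxy) hxy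
    simp only [hψ] at this
    nlinarith [this]
  · have hcont : ContinuousOn ψ (Icc y x) := by
      apply ContinuousOn.sub
      · exact H.gc.mono (Icc_subset_Icc hy.1 hx.2)
      · fun_prop
    have hsub : Ioo y x ⊆ Ioo a b := Ioo_subset_Ioo hy.1 hx.2
    have hmono : AntitoneOn ψ (Icc y x) := by
      apply antitoneOn_of_deriv_nonpos (convex_Icc y x) hcont
      · intro z hz
        rw [interior_Icc] at hz
        exact (hderiv z (hsub hz)).differentiableAt.differentiableWithinAt
      · intro z hz
        rw [interior_Icc] at hz
        rw [(hderiv z (hsub hz)).deriv]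
        have hzm : z ∈ Icc a b := ⟨hy.1.trans hz.1.le, hz.2.le.trans hx.2⟩
        have := abs_le.1 (H.lip hx hzm)
        rw [abs_of_nonneg (by linarith [hz.2] : (0:ℝ) ≤ x - z)] at this
        linarith [this.1]
    have := hmono (left_mem_Icc.2 hyx) (right_mem_Icc.2 hyx) hyx
    simp only [hψ] at this
    nlinarith [this]

/-- If a line lies below `g` on `[a,b]` and touches it at `z < b`, then `d ≤ g' z`. -/
lemma Env.grad_ge (H : Env a b g g' f M L) {c d z : ℝ} (hz : z ∈ Icc a b) (hzb : z < b)
    (hlow : ∀ w ∈ Icc a b, c + d * w ≤ g w) (heq : g z = c + d * z) : d ≤ g' z := by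
  have hder := hasDerivWithinAt_iff_tendsto_slope.1 (H.hg z hz)
  have hsub : Ioc z b ⊆ Icc a b \ {z} := by
    rintro w ⟨h1, h2⟩
    exact ⟨⟨hz.1.trans h1.le, h2⟩, ne_of_gt h1⟩
  have h2 : Tendsto (slope g z) (𝓝[Ioc z b] z) (𝓝 (g' z)) :=
    hder.mono_left (nhdsWithin_mono _ hsub)
  haveI : (𝓝[Ioc z b] z).NeBot := by
    rw [nhdsWithin_Ioc_eq_nhdsGT hzb]
    infer_instance
  refine ge_of_tendsto h2 ?_
  refine eventually_of_mem self_mem_nhdsWithin fun w hw => ?_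
  have hwm : w ∈ Icc a b := ⟨hz.1.trans hw.1.le, hw.2⟩
  have h3 : c + d * w ≤ g w := hlow w hwm
  rw [slope_def_field, le_div_iff₀ (by linarith [hw.1] : (0:ℝ) < w - z)]
  linarith

/-- If a line lies below `g` on `[a,b]` and touches it at `z > a`, then `g' z ≤ d`. -/
lemma Env.grad_le (H : Env a b g g' f M L) {c d z : ℝ} (hz : z ∈ Icc a b) (haz : a < z)
    (hlow : ∀ w ∈ Icc a b, c + d * w ≤ g w) (heq : g z = c + d * z) : g' z ≤ d := by
  have hder := hasDerivWithinAt_iff_tendsto_slope.1 (H.hg z hz)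
  have hsub : Ico a z ⊆ Icc a b \ {z} := by
    rintro w ⟨h1, h2⟩
    exact ⟨⟨h1, h2.le.trans hz.2⟩, ne_of_lt h2⟩
  have h2 : Tendsto (slope g z) (𝓝[Ico a z] z) (𝓝 (g' z)) :=
    hder.mono_left (nhdsWithin_mono _ hsub)
  haveI : (𝓝[Ico a z] z).NeBot := by
    rw [nhdsWithin_Ico_eq_nhdsLT haz]
    infer_instance
  refine le_of_tendsto h2 ?_
  refine eventually_of_mem self_mem_nhdsWithin fun w hw => ?_
  have hwm : w ∈ Icc a b := ⟨hw.1, hw.2.le.trans hz.2⟩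
  have h3 : c + d * w ≤ g w := hlow w hwm
  rw [slope_def_field, div_le_iff_of_neg (by linarith [hw.2] : w - z < 0)]
  linarith


/-- If `f` agrees with a line at `p` and `r` and lies above it on `[a,b]`,
then it agrees with the line on `[p,r]`. -/
lemma Env.chord_eq (H : Env a b g g' f M L) {c d p r y : ℝ} (hp : p ∈ Icc a b) (hr : r ∈ Icc a b)
    (hfp : f p = c + d * p) (hfr : f r = c + d * r)
    (hlow : ∀ z ∈ Icc a b, c + d * z ≤ f z) (hy : y ∈ Icc p r) : f y = c + d * y := by
  have hy' : y ∈ Icc a b := ⟨hp.1.trans hy.1, hy.2.trans hr.2⟩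
  refine le_antisymm ?_ (hlow y hy')
  rcases eq_or_lt_of_le (hy.1.trans hy.2) with heq | hpr
  · have h1 : y = p := le_antisymm (heq ▸ hy.2) hy.1
    rw [h1, hfp]
  · set t : ℝ := (r - y) / (r - p) with ht
    set u : ℝ := (y - p) / (r - p) with hu
    have hrp : (0:ℝ) < r - p := by linarith
    have h0t : 0 ≤ t := div_nonneg (by linarith [hy.2]) hrp.le
    have h0u : 0 ≤ u := div_nonneg (by linarith [hy.1]) hrp.le
    have htu : t + u = 1 := by
      rw [ht, hu]
      field_simp
      ring
    have hcomb : t * p + u * r = y := by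
      rw [ht, hu]
      field_simp
      ring
    have hsmul : t • p + u • r = y := by simpa [smul_eq_mul] using hcomb
    have := H.conv.2 hp hr h0t h0u htu
    rw [hsmul] at this
    calc f y ≤ t • f p + u • f r := this
      _ = c + d * y := by
          simp only [smul_eq_mul, hfp, hfr]
          linear_combination c * htu + d * hcomb

/-- There is a contact point of the supporting line with `g` to the right of `x`. -/
lemma Env.right_contact (H : Env a b g g' f M L) {x : ℝ} (hx : x ∈ Icc a b) :
    ∃ z ∈ Icc x b, g z = f x + msl a b f x * (z - x) := by
  by_contra hcon
  push_neg at hcon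
  set m := msl a b f x with hm
  have hlf : ∀ z ∈ Icc a b, f x + m * (z - x) ≤ f z := fun z hz => H.line_le hx hz
  have hlg : ∀ z ∈ Icc a b, f x + m * (z - x) ≤ g z := fun z hz =>
    (hlf z hz).trans (H.fg z hz)
  have hxb : x < b := by
    rcases lt_or_eq_of_le hx.2 with h | h
    · exact h
    · exfalso
      refine hcon b ⟨hx.2, le_refl b⟩ ?_
      rw [h, ← H.fb]
      ring
  -- minimum of g - line on [x, b]
  have hsub : Icc x b ⊆ Icc a b := Icc_subset_Icc hx.1 (le_refl b)
  obtain ⟨w₀, hw₀, hw₀min⟩ := isCompact_Icc.exists_isMinOn (nonempty_Icc.2 hxb.le)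
    ((H.gc.mono hsub).sub (Continuous.continuousOn (by continuity :
      Continuous (fun z : ℝ => f x + m * (z - x)))))
  rw [isMinOn_iff] at hw₀min
  set δ : ℝ := g w₀ - (f x + m * (w₀ - x)) with hδdef
  have hδ : 0 < δ := by
    rcases eq_or_lt_of_le (hlg w₀ (hsub hw₀)) with h | h
    · exact absurd h.symm (hcon w₀ hw₀)
    · linarith
  set ε : ℝ := δ / (2 * (b - x)) with hε
  have hεpos : 0 < ε := div_pos hδ (by linarith)
  -- minimum of g - tilted line over [a,b]
  obtain ⟨z₀, hz₀, hz₀min⟩ := isCompact_Icc.exists_isMinOn (nonempty_Icc.2 (H.hab.le))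
    (H.gc.sub (Continuous.continuousOn (by continuity :
      Continuous (fun z : ℝ => f x + m * (z - x) + ε * (z - x)))))
  rw [isMinOn_iff] at hz₀min
  set δ₃ : ℝ := g z₀ - (f x + m * (z₀ - x) + ε * (z₀ - x)) with hδ₃def
  have hδ₃ : 0 < δ₃ := by
    rcases lt_or_ge z₀ x with h | h
    · have := hlg z₀ hz₀
      have : 0 < -(ε * (z₀ - x)) := by
        rw [neg_pos]
        exact mul_neg_of_pos_of_neg hεpos (by linarith)
      have h2 := hlg z₀ hz₀
      simp only [hδ₃def]
      linarith
    · have h1 := hw₀min z₀ ⟨h, hz₀.2⟩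
      have h2 : ε * (z₀ - x) ≤ δ / 2 := by
        rw [hε]
        rw [div_mul_eq_mul_div, div_le_div_iff₀ (by linarith) (by norm_num)]
        have hzb : z₀ - x ≤ b - x := by linarith [hz₀.2]
        nlinarith [hδ]
      simp only [hδ₃def]
      simp only [hδdef, Pi.sub_apply] at h1
      linarith
  -- the raised tilted line is a convex minorant exceeding f at x
  have hminor : ∀ z ∈ Icc a b,
      (f x - (m + ε) * x + δ₃) + (m + ε) * z ≤ g z := by
    intro z hz
    have := hz₀min z hz
    simp only [hδ₃def, Pi.sub_apply] at this
    nlinarith [this]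
  have := H.max _ (lineConvexOn (convex_Icc a b) (f x - (m + ε) * x + δ₃) (m + ε)) hminor x hx
  nlinarith [this, hδ₃]

/-- There is a contact point of the supporting line with `g` to the left of `x`. -/
lemma Env.left_contact (H : Env a b g g' f M L) {x : ℝ} (hx : x ∈ Icc a b) :
    ∃ z ∈ Icc a x, g z = f x + msl a b f x * (z - x) := by
  by_contra hcon
  push_neg at hcon
  set m := msl a b f x with hm
  have hlf : ∀ z ∈ Icc a b, f x + m * (z - x) ≤ f z := fun z hz => H.line_le hx hz
  have hlg : ∀ z ∈ Icc a b, f x + m * (z - x) ≤ g z := fun z hz =>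
    (hlf z hz).trans (H.fg z hz)
  have hax : a < x := by
    rcases lt_or_eq_of_le hx.1 with h | h
    · exact h
    · exfalso
      refine hcon a ⟨le_refl a, hx.1⟩ ?_
      rw [← h, ← H.fa]
      ring
  have hsub : Icc a x ⊆ Icc a b := Icc_subset_Icc (le_refl a) hx.2
  obtain ⟨w₀, hw₀, hw₀min⟩ := isCompact_Icc.exists_isMinOn (nonempty_Icc.2 hax.le)
    ((H.gc.mono hsub).sub (Continuous.continuousOn (by continuity :
      Continuous (fun z : ℝ => f x + m * (z - x)))))
  rw [isMinOn_iff] at hw₀min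
  set δ : ℝ := g w₀ - (f x + m * (w₀ - x)) with hδdef
  have hδ : 0 < δ := by
    rcases eq_or_lt_of_le (hlg w₀ (hsub hw₀)) with h | h
    · exact absurd h.symm (hcon w₀ hw₀)
    · linarith
  set ε : ℝ := δ / (2 * (x - a)) with hε
  have hεpos : 0 < ε := div_pos hδ (by linarith)
  obtain ⟨z₀, hz₀, hz₀min⟩ := isCompact_Icc.exists_isMinOn (nonempty_Icc.2 (H.hab.le))
    (H.gc.sub (Continuous.continuousOn (by continuity :
      Continuous (fun z : ℝ => f x + m * (z - x) + ε * (x - z)))))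
  rw [isMinOn_iff] at hz₀min
  set δ₃ : ℝ := g z₀ - (f x + m * (z₀ - x) + ε * (x - z₀)) with hδ₃def
  have hδ₃ : 0 < δ₃ := by
    rcases lt_or_ge x z₀ with h | h
    · have h2 := hlg z₀ hz₀
      have h3 : 0 < -(ε * (x - z₀)) := by
        rw [neg_pos]
        exact mul_neg_of_pos_of_neg hεpos (by linarith)
      simp only [hδ₃def]
      linarith
    · have h1 := hw₀min z₀ ⟨hz₀.1, h⟩
      have h2 : ε * (x - z₀) ≤ δ / 2 := by
        rw [hε]
        rw [div_mul_eq_mul_div, div_le_div_iff₀ (by linarith) (by norm_num)]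
        have hza : x - z₀ ≤ x - a := by linarith [hz₀.1]
        nlinarith [hδ]
      simp only [hδ₃def]
      simp only [hδdef, Pi.sub_apply] at h1
      linarith
  have hminor : ∀ z ∈ Icc a b,
      (f x - (m - ε) * x + δ₃) + (m - ε) * z ≤ g z := by
    intro z hz
    have := hz₀min z hz
    simp only [hδ₃def, Pi.sub_apply] at this
    nlinarith [this]
  have := H.max _ (lineConvexOn (convex_Icc a b) (f x - (m - ε) * x + δ₃) (m - ε)) hminor x hx
  nlinarith [this, hδ₃]


/-- If the supporting line at `a` touches `g` only at `a`, then `g' a = msl a`. -/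
lemma Env.dich_a (H : Env a b g g' f M L)
    (hnc : ∀ w ∈ Ioc a b, g w ≠ f a + msl a b f a * (w - a)) :
    g' a = msl a b f a := by
  set m := msl a b f a with hm
  have hmem_a : a ∈ Icc a b := left_mem_Icc.2 H.hab.le
  have hlf : ∀ z ∈ Icc a b, f a + m * (z - a) ≤ f z := fun z hz => H.line_le hmem_a hz
  have hlg : ∀ z ∈ Icc a b, (f a - m * a) + m * z ≤ g z := fun z hz => by
    have := (hlf z hz).trans (H.fg z hz); linarith
  have h1 : m ≤ g' a :=
    H.grad_ge hmem_a H.hab hlg (by rw [← H.fa]; ring)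
  refine le_antisymm ?_ h1
  by_contra h2
  push_neg at h2
  set ε₀ : ℝ := g' a - m with hε₀
  have hε₀pos : 0 < ε₀ := by simp only [hε₀]; linarith
  have hM0 : (0:ℝ) ≤ (M:ℝ) := M.2
  have hden : (0:ℝ) < (M:ℝ) * (b - a) + ε₀ := by nlinarith [H.hab]
  set ρ : ℝ := (b - a) * ε₀ / ((M:ℝ) * (b - a) + ε₀) with hρ
  have hρpos : 0 < ρ := div_pos (by nlinarith [H.hab]) hden
  have hρb : ρ ≤ b - a := by
    rw [hρ, div_le_iff₀ hden]
    nlinarith [H.hab, mul_nonneg (mul_nonneg hM0 (by linarith [H.hab] : (0:ℝ) ≤ b - a))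
      (by linarith [H.hab] : (0:ℝ) ≤ b - a)]
  have hMρ : (M:ℝ) * ρ ≤ ε₀ := by
    rw [hρ, mul_div_assoc', div_le_iff₀ hden]
    nlinarith [H.hab]
  -- minimum over [a+ρ, b]
  have hsub : Icc (a + ρ) b ⊆ Icc a b := Icc_subset_Icc (by linarith) (le_refl b)
  obtain ⟨w₀, hw₀, hw₀min⟩ := isCompact_Icc.exists_isMinOn (nonempty_Icc.2 (by linarith))
    ((H.gc.mono hsub).sub (Continuous.continuousOn (by continuity :
      Continuous (fun z : ℝ => f a + m * (z - a)))))
  rw [isMinOn_iff] at hw₀min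
  set δ' : ℝ := g w₀ - (f a + m * (w₀ - a)) with hδ'
  have hδ'pos : 0 < δ' := by
    have hmem : w₀ ∈ Ioc a b := ⟨by linarith [hw₀.1], hw₀.2⟩
    have hne := hnc w₀ hmem
    have hge := hlg w₀ (hsub hw₀)
    rcases eq_or_lt_of_le hge with h | h
    · exact absurd (by linarith [h] : g w₀ = f a + m * (w₀ - a)) hne
    · simp only [hδ']; linarith
  set ε : ℝ := min (ε₀ / 2) (δ' / (b - a)) with hε
  have hεpos : 0 < ε := lt_min (by linarith) (div_pos hδ'pos (by linarith [H.hab]))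
  have hεhalf : ε ≤ ε₀ / 2 := min_le_left _ _
  have hεδ : ε * (b - a) ≤ δ' := by
    have := min_le_right (ε₀ / 2) (δ' / (b - a))
    rw [← hε] at this
    rw [← le_div_iff₀ (by linarith [H.hab] : (0:ℝ) < b - a)]
    exact this
  have hminor : ∀ z ∈ Icc a b, (f a - (m + ε) * a) + (m + ε) * z ≤ g z := by
    intro z hz
    rcases le_or_gt z (a + ρ) with h | h
    · have ht := H.taylor_ge hmem_a hz
      have h0 : 0 ≤ z - a := by linarith [hz.1]
      have h1' : z - a ≤ ρ := by linarith
      have k0 : (M:ℝ) * (z - a) ≤ (M:ℝ) * ρ := mul_le_mul_of_nonneg_left h1' hM0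
      have k1 : (M:ℝ) * (z - a) ^ 2 ≤ ε₀ * (z - a) := by nlinarith
      have k2 : ε * (z - a) ≤ ε₀ / 2 * (z - a) := mul_le_mul_of_nonneg_right hεhalf h0
      have := H.fa
      nlinarith [ht]
    · have hmin := hw₀min z ⟨h.le, hz.2⟩
      simp only [hδ', Pi.sub_apply] at hmin
      have : ε * (z - a) ≤ ε * (b - a) :=
        mul_le_mul_of_nonneg_left (by linarith [hz.2]) hεpos.le
      nlinarith [hmin]
  have hlef := H.max _ (lineConvexOn (convex_Icc a b) (f a - (m + ε) * a) (m + ε)) hminor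
  have hslope : ∀ y ∈ slope f a '' Ioc a b, m + ε ≤ y := by
    rintro _ ⟨z, hz, rfl⟩
    have := hlef z ⟨hz.1.le, hz.2⟩
    rw [slope_def_field, le_div_iff₀ (by linarith [hz.1] : (0:ℝ) < z - a)]
    nlinarith [this]
  have hne : (slope f a '' Ioc a b).Nonempty :=
    ⟨slope f a b, ⟨b, ⟨H.hab, le_refl b⟩, rfl⟩⟩
  have : m + ε ≤ m := by
    have h3 := le_csInf hne hslope
    have h4 : m = sInf (slope f a '' Ioc a b) := by rw [hm, msl, if_pos rfl]
    rw [← h4] at h3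
    exact h3
  linarith

/-- If the supporting line at `b` touches `g` only at `b`, then `g' b = msl b`. -/
lemma Env.dich_b (H : Env a b g g' f M L)
    (hnc : ∀ w ∈ Ico a b, g w ≠ f b + msl a b f b * (w - b)) :
    g' b = msl a b f b := by
  set m := msl a b f b with hm
  have hmem_b : b ∈ Icc a b := right_mem_Icc.2 H.hab.le
  have hlf : ∀ z ∈ Icc a b, f b + m * (z - b) ≤ f z := fun z hz => H.line_le hmem_b hz
  have hlg : ∀ z ∈ Icc a b, (f b - m * b) + m * z ≤ g z := fun z hz => by
    have := (hlf z hz).trans (H.fg z hz); linarith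
  have h1 : g' b ≤ m :=
    H.grad_le hmem_b H.hab hlg (by rw [← H.fb]; ring)
  refine le_antisymm h1 ?_
  by_contra h2
  push_neg at h2
  set ε₀ : ℝ := m - g' b with hε₀
  have hε₀pos : 0 < ε₀ := by simp only [hε₀]; linarith
  have hM0 : (0:ℝ) ≤ (M:ℝ) := M.2
  have hden : (0:ℝ) < (M:ℝ) * (b - a) + ε₀ := by nlinarith [H.hab]
  set ρ : ℝ := (b - a) * ε₀ / ((M:ℝ) * (b - a) + ε₀) with hρ
  have hρpos : 0 < ρ := div_pos (by nlinarith [H.hab]) hden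
  have hρb : ρ ≤ b - a := by
    rw [hρ, div_le_iff₀ hden]
    nlinarith [H.hab, mul_nonneg (mul_nonneg hM0 (by linarith [H.hab] : (0:ℝ) ≤ b - a))
      (by linarith [H.hab] : (0:ℝ) ≤ b - a)]
  have hMρ : (M:ℝ) * ρ ≤ ε₀ := by
    rw [hρ, mul_div_assoc', div_le_iff₀ hden]
    nlinarith [H.hab]
  have hsub : Icc a (b - ρ) ⊆ Icc a b := Icc_subset_Icc (le_refl a) (by linarith)
  obtain ⟨w₀, hw₀, hw₀min⟩ := isCompact_Icc.exists_isMinOn (nonempty_Icc.2 (by linarith))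
    ((H.gc.mono hsub).sub (Continuous.continuousOn (by continuity :
      Continuous (fun z : ℝ => f b + m * (z - b)))))
  rw [isMinOn_iff] at hw₀min
  set δ' : ℝ := g w₀ - (f b + m * (w₀ - b)) with hδ'
  have hδ'pos : 0 < δ' := by
    have hmem : w₀ ∈ Ico a b := ⟨hw₀.1, by linarith [hw₀.2]⟩
    have hne := hnc w₀ hmem
    have hge := hlg w₀ (hsub hw₀)
    rcases eq_or_lt_of_le hge with h | h
    · exact absurd (by linarith [h] : g w₀ = f b + m * (w₀ - b)) hne
    · simp only [hδ']; linarith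
  set ε : ℝ := min (ε₀ / 2) (δ' / (b - a)) with hε
  have hεpos : 0 < ε := lt_min (by linarith) (div_pos hδ'pos (by linarith [H.hab]))
  have hεhalf : ε ≤ ε₀ / 2 := min_le_left _ _
  have hεδ : ε * (b - a) ≤ δ' := by
    have := min_le_right (ε₀ / 2) (δ' / (b - a))
    rw [← hε] at this
    rw [← le_div_iff₀ (by linarith [H.hab] : (0:ℝ) < b - a)]
    exact this
  have hminor : ∀ z ∈ Icc a b, (f b - (m - ε) * b) + (m - ε) * z ≤ g z := by
    intro z hz
    rcases le_or_gt (b - ρ) z with h | h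
    · have ht := H.taylor_ge hmem_b hz
      have h0 : 0 ≤ b - z := by linarith [hz.2]
      have h1' : b - z ≤ ρ := by linarith
      have k0 : (M:ℝ) * (b - z) ≤ (M:ℝ) * ρ := mul_le_mul_of_nonneg_left h1' hM0
      have k1 : (M:ℝ) * (b - z) ^ 2 ≤ ε₀ * (b - z) := by nlinarith
      have k2 : ε * (b - z) ≤ ε₀ / 2 * (b - z) := mul_le_mul_of_nonneg_right hεhalf h0
      have := H.fb
      nlinarith [ht]
    · have hmin := hw₀min z ⟨hz.1, h.le⟩
      simp only [hδ', Pi.sub_apply] at hmin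
      have : ε * (b - z) ≤ ε * (b - a) :=
        mul_le_mul_of_nonneg_left (by linarith [hz.1]) hεpos.le
      nlinarith [hmin]
  have hlef := H.max _ (lineConvexOn (convex_Icc a b) (f b - (m - ε) * b) (m - ε)) hminor
  have hslope : ∀ y ∈ slope f b '' Ico a b, y ≤ m - ε := by
    rintro _ ⟨z, hz, rfl⟩
    have := hlef z ⟨hz.1, hz.2.le⟩
    rw [slope_def_field, div_le_iff_of_neg (by linarith [hz.2] : z - b < 0)]
    nlinarith [this]
  have hne : (slope f b '' Ico a b).Nonempty :=
    ⟨slope f b a, ⟨a, ⟨le_refl a, H.hab⟩, rfl⟩⟩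
  have : m ≤ m - ε := by
    have h3 := csSup_le hne hslope
    have h4 : m = sSup (slope f b '' Ico a b) := by rw [hm, msl, if_neg (ne_of_gt H.hab)]
    rw [← h4] at h3
    exact h3
  linarith


/-- Inequality (2): quadratic upper bound along the supporting line. -/
lemma Env.key2 (H : Env a b g g' f M L) {x y : ℝ} (hx : x ∈ Icc a b) (hy : y ∈ Icc a b) :
    f y ≤ f x + msl a b f x * (y - x) + (M:ℝ)/2 * (y - x)^2 := by
  set m := msl a b f x with hm
  have hM0 : (0:ℝ) ≤ (M:ℝ) := M.2
  have hlf : ∀ z ∈ Icc a b, f x + m * (z - x) ≤ f z := fun z hz => H.line_le hx hz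
  have hlg : ∀ z ∈ Icc a b, (f x - m * x) + m * z ≤ g z := fun z hz => by
    have := (hlf z hz).trans (H.fg z hz); linarith
  have hlf' : ∀ z ∈ Icc a b, (f x - m * x) + m * z ≤ f z := fun z hz => by
    have := hlf z hz; linarith
  rcases lt_trichotomy x y with hxy | rfl | hyx
  · -- x < y : use the rightmost contact point in [x,b]
    set C : Set ℝ := Icc x b ∩ (fun z => g z - (f x + m * (z - x))) ⁻¹' {0} with hC
    have hCclosed : IsClosed C :=
      ContinuousOn.preimage_isClosed_of_isClosed
        ((H.gc.mono (Icc_subset_Icc hx.1 (le_refl b))).sub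
          (Continuous.continuousOn (by continuity))) isClosed_Icc isClosed_singleton
    have hCne : C.Nonempty := by
      obtain ⟨z, hz1, hz2⟩ := H.right_contact hx
      exact ⟨z, hz1, by simp only [mem_preimage, mem_singleton_iff]; rw [hz2]; ring⟩
    have hCbdd : BddAbove C := ⟨b, fun w hw => hw.1.2⟩
    set z₂ := sSup C with hz₂def
    have hz₂C : z₂ ∈ C := hCclosed.csSup_mem hCne hCbdd
    obtain ⟨hz₂mem, hz₂pre⟩ := hz₂C
    have hz₂eq : g z₂ = f x + m * (z₂ - x) := by
      have := hz₂pre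
      simp only [mem_preimage, mem_singleton_iff] at this
      linarith
    have hz₂s : z₂ ∈ Icc a b := ⟨hx.1.trans hz₂mem.1, hz₂mem.2⟩
    have hfz₂ : f z₂ = f x + m * (z₂ - x) :=
      le_antisymm (hz₂eq ▸ H.fg z₂ hz₂s) (hlf z₂ hz₂s)
    rcases le_or_gt y z₂ with hyz | hzy
    · have hchord : f y = (f x - m * x) + m * y :=
        H.chord_eq hx hz₂s (by ring) (by rw [hfz₂]; ring) hlf' ⟨hxy.le, hyz⟩
      nlinarith [sq_nonneg (y - x)]
    · have hz₂b : z₂ < b := lt_of_lt_of_le hzy hy.2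
      rcases eq_or_lt_of_le hz₂s.1 with haz | haz
      · -- z₂ = a, so x = a : boundary dichotomy
        have hxa : x = a := le_antisymm (by rw [haz]; exact hz₂mem.1) hx.1
        have hma : m = msl a b f a := by rw [hm, hxa]
        have hnc : ∀ w ∈ Ioc a b, g w ≠ f a + msl a b f a * (w - a) := by
          intro w hw hcontra
          have hwC : w ∈ C := by
            refine ⟨⟨by rw [hxa]; exact hw.1.le, hw.2⟩, ?_⟩
            simp only [mem_preimage, mem_singleton_iff]
            rw [hxa, hma, hcontra]
            ring
          have hle := le_csSup hCbdd hwC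
          rw [← hz₂def] at hle
          have : w ≤ a := by rw [haz]; exact hle
          linarith [hw.1]
        have hga := H.dich_a hnc
        have ht := H.taylor_le (left_mem_Icc.2 H.hab.le) hy
        have hfgy := H.fg y hy
        have hfa := H.fa
        rw [hxa]
        rw [hga, ← hma] at ht
        linarith
      · -- a < z₂ < b : tangency at z₂
        have hg'z₂ : g' z₂ = m :=
          le_antisymm (H.grad_le hz₂s haz hlg (by rw [hz₂eq]; ring))
            (H.grad_ge hz₂s hz₂b hlg (by rw [hz₂eq]; ring))
        have ht := H.taylor_le hz₂s hy
        rw [hg'z₂] at ht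
        have hfgy := H.fg y hy
        have hsq : (y - z₂)^2 ≤ (y - x)^2 := by nlinarith [hz₂mem.1, hzy.le]
        have hq : (M:ℝ)/2 * (y - z₂)^2 ≤ (M:ℝ)/2 * (y - x)^2 :=
          mul_le_mul_of_nonneg_left hsq (by positivity)
        nlinarith [ht, hfgy, hq]
  · have : f x + m * (x - x) + (M:ℝ)/2 * (x - x)^2 = f x := by ring
    linarith
  · -- y < x : use the leftmost contact point in [a,x]
    set D : Set ℝ := Icc a x ∩ (fun z => g z - (f x + m * (z - x))) ⁻¹' {0} with hD
    have hDclosed : IsClosed D :=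
      ContinuousOn.preimage_isClosed_of_isClosed
        ((H.gc.mono (Icc_subset_Icc (le_refl a) hx.2)).sub
          (Continuous.continuousOn (by continuity))) isClosed_Icc isClosed_singleton
    have hDne : D.Nonempty := by
      obtain ⟨z, hz1, hz2⟩ := H.left_contact hx
      exact ⟨z, hz1, by simp only [mem_preimage, mem_singleton_iff]; rw [hz2]; ring⟩
    have hDbdd : BddBelow D := ⟨a, fun w hw => hw.1.1⟩
    set z₁ := sInf D with hz₁def
    have hz₁D : z₁ ∈ D := hDclosed.csInf_mem hDne hDbdd
    obtain ⟨hz₁mem, hz₁pre⟩ := hz₁D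
    have hz₁eq : g z₁ = f x + m * (z₁ - x) := by
      have := hz₁pre
      simp only [mem_preimage, mem_singleton_iff] at this
      linarith
    have hz₁s : z₁ ∈ Icc a b := ⟨hz₁mem.1, hz₁mem.2.trans hx.2⟩
    have hfz₁ : f z₁ = f x + m * (z₁ - x) :=
      le_antisymm (hz₁eq ▸ H.fg z₁ hz₁s) (hlf z₁ hz₁s)
    rcases le_or_gt z₁ y with hyz | hzy
    · have hchord : f y = (f x - m * x) + m * y :=
        H.chord_eq hz₁s hx (by rw [hfz₁]; ring) (by ring) hlf' ⟨hyz, hyx.le⟩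
      nlinarith [sq_nonneg (y - x)]
    · have hz₁a : a < z₁ := lt_of_le_of_lt hy.1 hzy
      rcases eq_or_lt_of_le (hz₁mem.2.trans hx.2 : z₁ ≤ b) with hzb | hzb
      · -- z₁ = b, so x = b : boundary dichotomy
        have hxb : x = b := le_antisymm hx.2 (by rw [← hzb]; exact hz₁mem.2)
        have hmb : m = msl a b f b := by rw [hm, hxb]
        have hnc : ∀ w ∈ Ico a b, g w ≠ f b + msl a b f b * (w - b) := by
          intro w hw hcontra
          have hwD : w ∈ D := by
            refine ⟨⟨hw.1, by rw [hxb]; exact hw.2.le⟩, ?_⟩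
            simp only [mem_preimage, mem_singleton_iff]
            rw [hxb, hmb, hcontra]
            ring
          have hle := csInf_le hDbdd hwD
          rw [← hz₁def] at hle
          have : b ≤ w := by rw [← hzb]; exact hle
          linarith [hw.2]
        have hgb := H.dich_b hnc
        have ht := H.taylor_le (right_mem_Icc.2 H.hab.le) hy
        have hfgy := H.fg y hy
        have hfb := H.fb
        rw [hxb]
        rw [hgb, ← hmb] at ht
        linarith
      · -- a < z₁ < b : tangency at z₁
        have hg'z₁ : g' z₁ = m :=
          le_antisymm (H.grad_le hz₁s hz₁a hlg (by rw [hz₁eq]; ring))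
            (H.grad_ge hz₁s hzb hlg (by rw [hz₁eq]; ring))
        have ht := H.taylor_le hz₁s hy
        rw [hg'z₁] at ht
        have hfgy := H.fg y hy
        have hsq : (y - z₁)^2 ≤ (y - x)^2 := by nlinarith [hz₁mem.2, hzy.le]
        have hq : (M:ℝ)/2 * (y - z₁)^2 ≤ (M:ℝ)/2 * (y - x)^2 :=
          mul_le_mul_of_nonneg_left hsq (by positivity)
        nlinarith [ht, hfgy, hq]

end Stmt3Aux

set_option maxHeartbeats 1600000 in
theorem stmt3 (a b : ℝ) (hab : a < b) (g g' : ℝ → ℝ) (M : NNReal)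
    (hg : ∀ x ∈ Set.Icc a b, HasDerivWithinAt g (g' x) (Set.Icc a b) x)
    (hM : LipschitzOnWith M g' (Set.Icc a b)) :
    ∃ m : ℝ → ℝ,
      (∀ u ∈ Set.Icc a b, HasDerivWithinAt (convEnv a b g) (m u) (Set.Icc a b) u) ∧
      LipschitzOnWith M m (Set.Icc a b) := by
  classical
  open Stmt3Aux in
  have gc : ContinuousOn g (Icc a b) := fun x hx => (hg x hx).continuousWithinAt
  obtain ⟨L, hLb⟩ := isCompact_Icc.exists_bound_of_continuousOn hM.continuousOn
  have hL : ∀ z ∈ Icc a b, ∀ w ∈ Icc a b, |g z - g w| ≤ L * |z - w| := by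
    intro z hz w hw
    have := Convex.norm_image_sub_le_of_norm_hasDerivWithin_le hg hLb (convex_Icc a b) hw hz
    simpa [Real.norm_eq_abs] using this
  set f := convEnv a b g with hfdef
  have hconv : ConvexOn ℝ (Icc a b) f := Stmt3Aux.convEnv_convexOn hab.le gc
  have hfg : ∀ z ∈ Icc a b, f z ≤ g z := fun z hz => Stmt3Aux.convEnv_le hab.le gc hz
  have hmax : ∀ h : ℝ → ℝ, ConvexOn ℝ (Icc a b) h → (∀ z ∈ Icc a b, h z ≤ g z) →
      ∀ z ∈ Icc a b, h z ≤ f z := fun h hc hle z hz => Stmt3Aux.le_convEnv hc hle hz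
  have hL0 : 0 ≤ L := by
    have := hLb a (left_mem_Icc.2 hab.le)
    exact le_trans (norm_nonneg _) this
  have hfa : f a = g a := by
    refine le_antisymm (hfg a (left_mem_Icc.2 hab.le)) ?_
    have hline : ∀ w ∈ Icc a b, (g a + L * a) + (-L) * w ≤ g w := by
      intro w hw
      have := hL a (left_mem_Icc.2 hab.le) w hw
      rw [abs_sub_comm, abs_of_nonpos (by linarith [hw.1] : a - w ≤ 0)] at this
      have h2 := abs_le.1 this
      linarith [h2.1]
    have := hmax _ (Stmt3Aux.lineConvexOn (convex_Icc a b) (g a + L * a) (-L)) hline a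
      (left_mem_Icc.2 hab.le)
    linarith
  have hfb : f b = g b := by
    refine le_antisymm (hfg b (right_mem_Icc.2 hab.le)) ?_
    have hline : ∀ w ∈ Icc a b, (g b - L * b) + L * w ≤ g w := by
      intro w hw
      have := hL b (right_mem_Icc.2 hab.le) w hw
      rw [abs_of_nonneg (by linarith [hw.2] : (0:ℝ) ≤ b - w)] at this
      have h2 := abs_le.1 this
      linarith [h2.1]
    have := hmax _ (Stmt3Aux.lineConvexOn (convex_Icc a b) (g b - L * b) L) hline b
      (right_mem_Icc.2 hab.le)
    linarith
  have H : Stmt3Aux.Env a b g g' f M L :=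
    ⟨hab, hconv, hfg, hmax, hfa, hfb, gc, hg, hM, hL⟩
  refine ⟨Stmt3Aux.msl a b f, fun u hu => ?_, ?_⟩
  · -- differentiability
    rw [hasDerivWithinAt_iff_tendsto_slope]
    have key : ∀ y ∈ Icc a b \ {u},
        dist (slope f u y) (Stmt3Aux.msl a b f u) ≤ (M:ℝ)/2 * |y - u| := by
      rintro y ⟨hy, hne⟩
      have hne' : y ≠ u := hne
      have hyu : y - u ≠ 0 := sub_ne_zero.2 hne'
      have h1 := H.line_le hu hy
      have h2 := H.key2 hu hy
      rw [Real.dist_eq, slope_def_field]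
      have hexp : (f y - f u) / (y - u) - Stmt3Aux.msl a b f u
          = (f y - f u - Stmt3Aux.msl a b f u * (y - u)) / (y - u) := by
        field_simp
      rw [hexp, abs_div]
      rw [div_le_iff₀ (abs_pos.2 hyu)]
      have hNnn : 0 ≤ f y - f u - Stmt3Aux.msl a b f u * (y - u) := by linarith
      rw [abs_of_nonneg hNnn]
      have habs : (M:ℝ)/2 * |y - u| * |y - u| = (M:ℝ)/2 * (y - u)^2 := by
        rw [mul_assoc, abs_mul_abs_self]
        ring
      linarith [h2, habs]
    have h0 : Filter.Tendsto (fun y : ℝ => (M:ℝ)/2 * |y - u|) (nhdsWithin u (Icc a b \ {u}))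
        (nhds 0) := by
      have hc : Continuous (fun y : ℝ => (M:ℝ)/2 * |y - u|) := by continuity
      have := (hc.tendsto u).mono_left (nhdsWithin_le_nhds (s := Icc a b \ {u}))
      simpa using this
    refine tendsto_iff_dist_tendsto_zero.2 ?_
    exact squeeze_zero' (Filter.Eventually.of_forall fun _ => dist_nonneg)
      (Filter.eventually_of_mem self_mem_nhdsWithin key) h0
  · -- Lipschitz bound on the derivative
    refine LipschitzOnWith.of_dist_le_mul fun p hp q hq => ?_
    rw [Real.dist_eq, Real.dist_eq]
    have h1 := H.line_le hp hq
    have h2 := H.line_le hq hp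
    have h3 := H.key2 hp hq
    have h4 := H.key2 hq hp
    obtain ⟨mp, hmp⟩ : ∃ v : ℝ, Stmt3Aux.msl a b f p = v := ⟨_, rfl⟩
    obtain ⟨mq, hmq⟩ : ∃ v : ℝ, Stmt3Aux.msl a b f q = v := ⟨_, rfl⟩
    obtain ⟨fp, hfp⟩ : ∃ v : ℝ, f p = v := ⟨_, rfl⟩
    obtain ⟨fq, hfq⟩ : ∃ v : ℝ, f q = v := ⟨_, rfl⟩
    simp only [hmp, hmq, hfp, hfq] at h1 h2 h3 h4 ⊢
    have hM0 : (0:ℝ) ≤ (M:ℝ) := M.2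
    have hmono : 0 ≤ (mq - mp) * (q - p) := by nlinarith [h1, h2]
    have hbound : (mq - mp) * (q - p) ≤ (M:ℝ) * (q - p)^2 := by nlinarith [h3, h4]
    rcases lt_trichotomy p q with h | rfl | h
    · rw [abs_of_nonpos (by linarith : p - q ≤ 0)]
      have hqp : 0 < q - p := by linarith
      have hA : mp ≤ mq := by nlinarith [hmono]
      have hB : mq - mp ≤ (M:ℝ) * (q - p) := by nlinarith [hbound, hqp]
      rw [abs_le]
      constructor <;> nlinarith [hA, hB, mul_nonneg hM0 hqp.le]
    · have heq : mp = mq := by rw [← hmp, ← hmq]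
      simp [heq]
    · rw [abs_of_nonneg (by linarith : (0:ℝ) ≤ p - q)]
      have hqp : q - p < 0 := by linarith
      have hA : mq ≤ mp := by nlinarith [hmono]
      have hB : mp - mq ≤ (M:ℝ) * (p - q) := by nlinarith [hbound]
      rw [abs_le]
      constructor <;> nlinarith [hA, hB, mul_nonneg hM0 (by linarith : (0:ℝ) ≤ p - q)]
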